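/- Every percolation path from q to a vertex t has length either γ(t) or γ(t)+1. Conversely, every shortest path from q to t is a percolation path. -/

import Mathlib

variable {V : Type*}

/-- `vs` is the list of successive vertices (after `q`) of a walk in the directed graph
with edge relation `E`, starting at `q` and ending at `t`.  Its length is `vs.length`. -/
def IsWalkFrom (E : V → V → Prop) (q : V) (vs : List V) (t : V) : Prop :=
  List.Chain E q vs ∧ (q :: vs).getLast (List.cons_ne_nil q vs) = t

/-- The list of directed edges traversed by the walk `q :: vs`. -/
def edgesOf (q : V) (vs : List V) : List (V × V) :=
  (q :: vs).zip vs

/-- A shortest path from `q` to `t`: a walk whose length equals the distance `γ t`. -/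
def IsShortestWalk (E : V → V → Prop) (q : V) (γ : V → ℕ) (vs : List V) (t : V) : Prop :=
  IsWalkFrom E q vs t ∧ vs.length = γ t

/-- The edge `e` lies on some shortest path from `q` to `v`. -/
def OnShortestPath (E : V → V → Prop) (q : V) (γ : V → ℕ) (e : V × V) (v : V) : Prop :=
  ∃ vs, IsShortestWalk E q γ vs v ∧ e ∈ edgesOf q vs

/-- A redundant path from `q` to `v`: a walk of length strictly greater than `γ v`, at
least `γ v` of whose (distinct) edges also occur in shortest paths from `q` to `v`. -/
def IsRedundantWalk (E : V → V → Prop) (q : V) (γ : V → ℕ) (vs : List V) (v : V) : Prop :=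
  IsWalkFrom E q vs v ∧ γ v < vs.length ∧
    ∃ es : List (V × V), es.Nodup ∧ (∀ e ∈ es, e ∈ edgesOf q vs) ∧ γ v ≤ es.length ∧
      ∀ e ∈ es, OnShortestPath E q γ e v

/-- `γ` is the shortest-path distance from `q` in the (connected) graph `E`: every vertex
is reachable by a walk of length `γ v`, and no walk to `v` is shorter than `γ v`. -/
def IsDistance (E : V → V → Prop) (q : V) (γ : V → ℕ) : Prop :=
  (∀ v (vs : List V), IsWalkFrom E q vs v → γ v ≤ vs.length) ∧
  (∀ v, ∃ vs, IsWalkFrom E q vs v ∧ vs.length = γ v)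

/-- A percolation path from `q` to `t`: a walk all of whose edges before the last are
strictly downhill (`γ` increases by exactly 1) and whose last edge `(u, v)` satisfies
`γ u ≤ γ v` (downhill or level). -/
def IsPercolationWalk (E : V → V → Prop) (q : V) (γ : V → ℕ) (vs : List V) (t : V) :
    Prop :=
  IsWalkFrom E q vs t ∧
  (∀ e ∈ (edgesOf q vs).dropLast, γ e.2 = γ e.1 + 1) ∧
  (vs ≠ [] →
    γ ((edgesOf q vs).getLastD (q, q)).1 ≤ γ ((edgesOf q vs).getLastD (q, q)).2)

-- auxiliary
lemma edgesOf_cons (u v : V) (rest : List V) :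
    edgesOf u (v :: rest) = (u, v) :: edgesOf v rest := by
  simp [edgesOf]

lemma chain_getLast_le (E : V → V → Prop) (γ : V → ℕ)
    (hadj : ∀ u v, E u v → γ v ≤ γ u + 1) :
    ∀ (vs : List V) (u : V), List.Chain E u vs →
      γ ((u :: vs).getLast (by simp)) ≤ γ u + vs.length := by
  intro vs
  induction vs with
  | nil => intro u _; simp
  | cons v rest ih =>
    intro u h
    rcases List.chain_cons.1 h with ⟨huv, hrest⟩
    have h1 := ih v hrest
    have h2 := hadj u v huv
    rw [List.getLast_cons (by simp : (v :: rest) ≠ [])]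
    simp only [List.length_cons]
    omega

lemma chain_downhill (E : V → V → Prop) (γ : V → ℕ)
    (hadj : ∀ u v, E u v → γ v ≤ γ u + 1) :
    ∀ (vs : List V) (u : V), List.Chain E u vs →
      γ u + vs.length ≤ γ ((u :: vs).getLast (by simp)) →
      ∀ e ∈ edgesOf u vs, γ e.2 = γ e.1 + 1 := by
  intro vs
  induction vs with
  | nil => intro u _ _ e he; simp [edgesOf] at he
  | cons v rest ih =>
    intro u h hle e he
    rcases List.chain_cons.1 h with ⟨huv, hrest⟩
    rw [List.getLast_cons (by simp : (v :: rest) ≠ [])] at hle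
    have h1 := chain_getLast_le E γ hadj rest v hrest
    have h2 := hadj u v huv
    have hv : γ v = γ u + 1 := by simp only [List.length_cons] at hle; omega
    rw [edgesOf_cons] at he
    rcases List.mem_cons.1 he with rfl | he'
    · simpa using hv
    · exact ih v hrest (by simp only [List.length_cons] at hle; omega) e he'

lemma perc_lastEdge (E : V → V → Prop) (γ : V → ℕ) :
    ∀ (vs : List V) (u : V), vs ≠ [] → List.Chain E u vs →
      (∀ e ∈ (edgesOf u vs).dropLast, γ e.2 = γ e.1 + 1) →
      γ ((edgesOf u vs).getLastD (u, u)).1 = γ u + vs.length - 1 ∧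
        ((edgesOf u vs).getLastD (u, u)).2 = (u :: vs).getLast (by simp) := by
  intro vs
  induction vs with
  | nil => intro u h; exact absurd rfl h
  | cons v rest ih =>
    intro u _ h hd
    rcases List.chain_cons.1 h with ⟨huv, hrest⟩
    rcases eq_or_ne rest [] with rfl | hne
    · simp [edgesOf]
    · have hcons : edgesOf u (v :: rest) = (u, v) :: edgesOf v rest :=
        edgesOf_cons u v rest
      have hnil : edgesOf v rest ≠ [] := by
        cases rest with
        | nil => exact absurd rfl hne
        | cons w rs => rw [edgesOf_cons]; simp
      have hd' : ∀ e ∈ (edgesOf v rest).dropLast, γ e.2 = γ e.1 + 1 := by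
        intro e he
        apply hd
        rw [hcons, List.dropLast_cons_of_ne_nil hnil]
        exact List.mem_cons_of_mem _ he
      have huv' : γ v = γ u + 1 := by
        have := hd (u, v) (by
          rw [hcons, List.dropLast_cons_of_ne_nil hnil]
          exact List.mem_cons_self)
        simpa using this
      obtain ⟨h1, h2⟩ := ih v hne hrest hd'
      have hdflt : ∀ d : V × V, (edgesOf v rest).getLastD d =
          (edgesOf v rest).getLastD (v, v) := by
        intro d
        rw [List.getLastD_eq_getLast?, List.getLastD_eq_getLast?,
          List.getLast?_eq_getLast hnil]
        simp
      constructor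
      · rw [hcons, List.getLastD_cons, hdflt, h1, huv']
        cases rest with
        | nil => exact absurd rfl hne
        | cons w rs => simp [List.length_cons]; omega
      · rw [hcons, List.getLastD_cons, hdflt, h2,
          List.getLast_cons (by simp : (v :: rest) ≠ [])]

lemma getLastD_mem {α : Type*} (l : List α) (d : α) (h : l ≠ []) : l.getLastD d ∈ l := by
  rw [List.getLastD_eq_getLast?, List.getLast?_eq_getLast h]
  exact List.getLast_mem h

lemma edgesOf_ne_nil (q : V) (vs : List V) (h : vs ≠ []) : edgesOf q vs ≠ [] := by
  intro hc
  have : (edgesOf q vs).length = vs.length := by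
    simp [edgesOf]
  rw [hc] at this
  exact h (List.eq_nil_of_length_eq_zero this.symm)

/-- Every percolation path from `q` to `t` has length `γ t` or `γ t + 1`, and conversely
every shortest path from `q` to `t` is a percolation path.  (`γ` is the shortest-path
distance from `q`, and edges change `γ` by at most 1.) -/
theorem percolation_walk_length_and_shortest_is_percolation
    (E : V → V → Prop) (q : V) (γ : V → ℕ) (hγ : IsDistance E q γ)
    (hadj : ∀ u v, E u v → γ v ≤ γ u + 1) :
    (∀ (vs : List V) (t : V), IsPercolationWalk E q γ vs t →
        vs.length = γ t ∨ vs.length = γ t + 1) ∧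
      (∀ (vs : List V) (t : V), IsShortestWalk E q γ vs t →
        IsPercolationWalk E q γ vs t) := by
  have hq0 : γ q = 0 := by
    have := hγ.1 q [] ⟨List.Chain.nil, rfl⟩
    simpa using this
  constructor
  · rintro vs t ⟨⟨hc, hl⟩, hd, hlast⟩
    rcases eq_or_ne vs [] with rfl | hne
    · left
      simp at hl
      simp [hl ▸ hq0]
    · obtain ⟨h1, h2⟩ := perc_lastEdge E γ vs q hne hc hd
      rw [hl] at h2
      have hle := hlast hne
      rw [h1, h2] at hle
      have hub := hγ.1 t vs ⟨hc, hl⟩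
      have hpos : 1 ≤ vs.length := List.length_pos_iff.2 hne
      omega
  · rintro vs t ⟨⟨hc, hl⟩, hlen⟩
    have hall : ∀ e ∈ edgesOf q vs, γ e.2 = γ e.1 + 1 := by
      apply chain_downhill E γ hadj vs q hc
      rw [hl, hq0, hlen]; omega
    refine ⟨⟨hc, hl⟩, ?_, ?_⟩
    · intro e he
      exact hall e (List.dropLast_subset _ he)
    · intro hne
      have hmem := getLastD_mem (edgesOf q vs) (q, q) (edgesOf_ne_nil q vs hne)
      rw [hall _ hmem]
      omega
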